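/- arXiv:2112.14873 — 4 statements merged into one kernel-verified Lean document; each statement's English description precedes it below -/
import Mathlib

section
/- Let C be an abelian category and T a class of objects of C. For every class Z of objects of C all of whose members are T-compact for monomorphisms, one has Add(T) ∩ Z = add(T) ∩ Z. That is, if X ∈ Z is a direct summand of a (possibly infinite) coproduct of objects of T, then X is a direct summand of a finite coproduct of objects of T. -/
open CategoryTheory Limits

universe w v u

variable {C : Type u} [Category.{v} C] [Abelian C]

/-- `X ∈ Add(T)`: `X` is a direct summand of a (possibly infinite) coproduct of objects of `T`,
whenever such a coproduct exists (expressed via a colimit cofan). -/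
def MemAdd (T : Set C) (X : C) : Prop :=
  ∃ (I : Type w) (U : I → C), (∀ i, U i ∈ T) ∧
    ∃ (c : Cofan U), Nonempty (IsColimit c) ∧
      ∃ (s : X ⟶ c.pt) (r : c.pt ⟶ X), s ≫ r = 𝟙 X

/-- `X ∈ add(T)`: `X` is a direct summand of a finite coproduct of objects of `T`. -/
def Memadd (T : Set C) (X : C) : Prop :=
  ∃ (n : ℕ) (U : Fin n → C), (∀ i, U i ∈ T) ∧
    ∃ (s : X ⟶ ∐ U) (r : (∐ U) ⟶ X), s ≫ r = 𝟙 X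

/-- `M` is `T`-compact for monomorphisms: every monomorphism from `M` into a coproduct of
objects of `T` (whenever it exists) factors through the inclusion of a finite
subcoproduct. -/
def IsTCompactMono (T : Set C) (M : C) : Prop :=
  ∀ ⦃I : Type w⦄ (U : I → C), (∀ i, U i ∈ T) →
    ∀ (c : Cofan U), IsColimit c → ∀ f : M ⟶ c.pt, Mono f →
      ∃ (F : Finset I) (g : M ⟶ ∐ (fun i : F => U i)),
        f = g ≫ Sigma.desc (fun i : F => c.inj i.1)

/-- If every member of `Z` is `T`-compact for monomorphisms, then
`Add(T) ∩ Z = add(T) ∩ Z`. -/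
theorem stmt5 (T Z : Set C) (hZ : ∀ X ∈ Z, IsTCompactMono.{w} T X) :
    ∀ X ∈ Z, (MemAdd.{w} T X ↔ Memadd T X) := by
  intro X hX
  constructor
  · rintro ⟨I, U, hU, c, ⟨hc⟩, s, r, hsr⟩
    haveI : IsSplitMono s := IsSplitMono.mk' ⟨r, hsr⟩
    obtain ⟨F, g, hg⟩ := hZ X hX U hU c hc s inferInstance
    classical
    let e : F ≃ Fin F.card := F.equivFin
    refine ⟨F.card, fun k => U (e.symm k).1, fun k => hU _, ?_⟩
    let iso : (∐ fun i : F => U i.1) ≅ ∐ fun k => U ((e.symm k) : F).1 :=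
      Sigma.whiskerEquiv e (fun j => eqToIso (by simp))
    refine ⟨g ≫ iso.hom, iso.inv ≫ Sigma.desc (fun i : F => c.inj i.1) ≫ r, ?_⟩
    rw [Category.assoc, Iso.hom_inv_id_assoc, ← Category.assoc, ← hg, hsr]
  · rintro ⟨n, U, hU, s, r, hsr⟩
    refine ⟨ULift.{w} (Fin n), fun i => U i.down, fun i => hU _, ?_⟩
    haveI : HasCoproduct (fun i : ULift.{w} (Fin n) => U i.down) := inferInstance
    let iso : (∐ U) ≅ ∐ (fun i : ULift.{w} (Fin n) => U i.down) :=
      Sigma.whiskerEquiv (Equiv.ulift.symm) (fun j => eqToIso (by simp))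
    exact ⟨Cofan.mk (∐ fun i : ULift.{w} (Fin n) => U i.down) (fun i => Sigma.ι (fun j : ULift.{w} (Fin n) => U j.down) i),
      ⟨coproductIsCoproduct _⟩, s ≫ iso.hom, iso.inv ≫ r,
      by rw [Category.assoc, Iso.hom_inv_id_assoc, hsr]⟩
end

section
/- Let C be an abelian category, X a class of objects of C closed under direct summands, and T a class of objects of C closed under direct summands such that Ext^i_C(T, T') = 0 for all T, T' ∈ T ∩ X and all i ≥ 1. Suppose A ∈ T^⊥ admits a short exact sequence 0 → A → T_0 → A' → 0 with T_0 ∈ T ∩ X and Ext^1_C(A', A) = 0. Then A ∈ T ∩ X. -/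
open CategoryTheory Limits

universe w v u

/-- Let `C` be abelian, `𝒳` and `𝒯` classes closed under direct summands
with `Ext^i(T, T') = 0` for all `T, T' ∈ 𝒯 ∩ 𝒳` and `i ≥ 1`. If `A ∈ 𝒯^⊥` admits a short
exact sequence `0 → A → T₀ → A' → 0` with `T₀ ∈ 𝒯 ∩ 𝒳` and `Ext¹(A', A) = 0`, then
`A ∈ 𝒯 ∩ 𝒳`. -/
theorem stmt9 {C : Type u} [Category.{v} C] [Abelian C] [HasExt.{w} C]
    (𝒳 𝒯 : Set C)
    (hXsmd : ∀ ⦃X Y : C⦄ (s : X ⟶ Y) (r : Y ⟶ X), s ≫ r = 𝟙 X → Y ∈ 𝒳 → X ∈ 𝒳)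
    (hTsmd : ∀ ⦃X Y : C⦄ (s : X ⟶ Y) (r : Y ⟶ X), s ≫ r = 𝟙 X → Y ∈ 𝒯 → X ∈ 𝒯)
    (hTT : ∀ T ∈ 𝒯 ∩ 𝒳, ∀ T' ∈ 𝒯 ∩ 𝒳, ∀ i : ℕ, 1 ≤ i →
      Subsingleton (Abelian.Ext T T' i))
    {A T₀ A' : C}
    (hA : ∀ T ∈ 𝒯, ∀ i : ℕ, 1 ≤ i → Subsingleton (Abelian.Ext T A i))
    (f : A ⟶ T₀) (g : T₀ ⟶ A') (w : f ≫ g = 0)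
    (hse : (ShortComplex.mk f g w).ShortExact)
    (hT₀ : T₀ ∈ 𝒯 ∩ 𝒳)
    (hA' : Subsingleton (Abelian.Ext A' A 1)) :
    A ∈ 𝒯 ∩ 𝒳 := by
  -- Step 1: from the long exact sequence, lift `𝟙 A` along `f` at the level of `Ext⁰`.
  obtain ⟨x₂, hx₂⟩ := Abelian.Ext.contravariant_sequence_exact₁ hse A (Abelian.Ext.mk₀ (𝟙 A))
    (by omega : (1 : ℕ) + 0 = 1) (Subsingleton.elim _ _)
  -- Step 2: pass to the derived category.
  letI := HasDerivedCategory.standard C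
  set S := DerivedCategory.singleFunctor C 0
  -- the morphism in the derived category corresponding to `x₂`
  let ρ : S.obj T₀ ⟶ S.obj A :=
    x₂.hom ≫ (shiftFunctorZero' (DerivedCategory C) ((0 : ℕ) : ℤ) (by simp)).hom.app (S.obj A)
  have hρ : S.map f ≫ ρ = 𝟙 (S.obj A) := by
    have h1 : ((Abelian.Ext.mk₀ f).comp x₂ (zero_add 0)).hom
        = (Abelian.Ext.mk₀ (𝟙 A)).hom := by rw [hx₂]
    rw [Abelian.Ext.comp_hom, Abelian.Ext.mk₀_hom, ShiftedHom.mk₀_comp] at h1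
    dsimp only [ρ]
    rw [← Category.assoc, h1, Abelian.Ext.mk₀_hom]
    simp [ShiftedHom.mk₀, shiftFunctorZero']
    exact Iso.inv_hom_id_app _ _
  -- Step 3: apply the homology functor `H⁰` and use `H⁰(single X) ≅ X`.
  let H := DerivedCategory.homologyFunctor C 0
  let e : S ⋙ H ≅ 𝟭 C :=
    Functor.isoWhiskerRight ((SingleFunctors.evaluation _ _ 0).mapIso
        (DerivedCategory.singleFunctorsPostcompQIso C)) H ≪≫
      Functor.associator _ _ _ ≪≫
      Functor.isoWhiskerLeft _ (DerivedCategory.homologyFunctorFactors C 0) ≪≫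
      HomologicalComplex.homologyFunctorSingleIso C _ 0
  let r : T₀ ⟶ A := e.inv.app T₀ ≫ H.map ρ ≫ e.hom.app A
  have hfr : f ≫ r = 𝟙 A := by
    have hnat := e.inv.naturality f
    simp only [Functor.id_map] at hnat
    dsimp only [r]
    rw [← Category.assoc, hnat, Functor.comp_map, Category.assoc, ← Functor.map_comp_assoc,
      hρ, CategoryTheory.Functor.map_id, Category.id_comp, Iso.inv_hom_id_app]
    rfl
  exact ⟨hTsmd f r hfr hT₀.1, hXsmd f r hfr hT₀.2⟩
end

section
/- Let C be an abelian category, T a class of objects of C with T ⊆ T^⊥ (i.e., Ext^i(T,T')=0 for all T,T' ∈ T, i ≥ 1), and suppose there is an exact sequence 0 → W → M_0 → M_1 → ⋯ → M_n → 0 with all M_j ∈ T. Then the map f_0 : W → M_0 is a special T^⊥-preenvelope of W: it is a monomorphism with M_0 ∈ T^⊥ and Coker(f_0) ∈ ⊥(T^⊥), and every morphism from W to an object of T^⊥ factors through f_0. -/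
open CategoryTheory Limits

universe w v u

variable {C : Type u} [Category.{v} C] [Abelian C]

/-- `CoresOfLength T n M` means there is an exact sequence
`0 → M → T₀ → T₁ → ⋯ → Tₙ → 0` with all `Tⱼ ∈ T`. -/
def CoresOfLength (T : Set C) : ℕ → C → Prop
  | 0, M => ∃ T₀ ∈ T, Nonempty (M ≅ T₀)
  | n + 1, M => ∃ (T₀ M' : C) (f : M ⟶ T₀) (g : T₀ ⟶ M') (w : f ≫ g = 0),
      T₀ ∈ T ∧ (ShortComplex.mk f g w).ShortExact ∧ CoresOfLength T n M'

variable [HasExt.{w} C]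

/-- The right orthogonal class `𝒯^⊥ = {B | Ext^i(T, B) = 0 for all T ∈ 𝒯, i ≥ 1}`. -/
def rightPerp (𝒯 : Set C) : Set C :=
  {B | ∀ T ∈ 𝒯, ∀ i : ℕ, 1 ≤ i → Subsingleton (Abelian.Ext T B i)}

/-- The left orthogonal class `⊥𝒮 = {A | Ext^i(A, B) = 0 for all B ∈ 𝒮, i ≥ 1}`. -/
def leftPerp (𝒮 : Set C) : Set C :=
  {A | ∀ B ∈ 𝒮, ∀ i : ℕ, 1 ≤ i → Subsingleton (Abelian.Ext A B i)}

namespace Stmt10Aux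

open CategoryTheory.Abelian DerivedCategory

universe w'

/-- The natural isomorphism `single ⋙ H⁰ ≅ 𝟭 C`. -/
noncomputable def ε [HasDerivedCategory.{w'} C] :
    DerivedCategory.singleFunctor C 0 ⋙ DerivedCategory.homologyFunctor C 0 ≅ 𝟭 C :=
  Functor.isoWhiskerRight ((SingleFunctors.evaluation _ _ 0).mapIso (singleFunctorsPostcompQIso C))
      (homologyFunctor C 0) ≪≫
    Functor.associator _ _ _ ≪≫
    Functor.isoWhiskerLeft _ (homologyFunctorFactors C 0) ≪≫
    HomologicalComplex.homologyFunctorSingleIso C (ComplexShape.up ℤ) 0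

/-- The canonical map `Ext X Y 0 → (X ⟶ Y)`, defined via the homology functor `H⁰`. -/
noncomputable def ext0ToHom {X Y : C} (x : Ext.{w} X Y 0) : X ⟶ Y :=
  letI := HasDerivedCategory.standard C
  ε.inv.app X ≫ (homologyFunctor C 0).map
    (x.hom ≫ (shiftFunctorZero' (DerivedCategory C) ((0 : ℕ) : ℤ) (by simp)).hom.app _) ≫
    ε.hom.app Y

lemma ext0ToHom_mk₀ {X Y : C} (f : X ⟶ Y) : ext0ToHom (Ext.mk₀ f) = f := by
  letI := HasDerivedCategory.standard C
  dsimp [ext0ToHom]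
  rw [Ext.mk₀_hom]
  have := ε.hom.naturality f
  dsimp at this ⊢
  simp only [ShiftedHom.mk₀, Category.assoc, Iso.inv_hom_id_app, Category.comp_id,
    Functor.id_obj]
  rw [this, ← Category.assoc, Iso.inv_hom_id_app]
  simp

lemma ext0ToHom_mk₀_comp {X Y Z : C} (f : X ⟶ Y) (x : Ext.{w} Y Z 0) :
    ext0ToHom ((Ext.mk₀ f).comp x (zero_add 0)) = f ≫ ext0ToHom x := by
  letI := HasDerivedCategory.standard C
  dsimp [ext0ToHom]
  rw [← Ext.singleFunctor_map_comp_hom, Category.assoc, Functor.map_comp]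
  have := ε.inv.naturality f
  dsimp at this
  simp only [← Category.assoc]
  rw [← this]

lemma subsingleton_of_iso {X X' Y : C} (e : X ≅ X') (n : ℕ)
    (h : Subsingleton (Ext.{w} X' Y n)) : Subsingleton (Ext.{w} X Y n) := by
  constructor
  intro a b
  have h' : (Ext.mk₀ e.inv).comp a (zero_add n) = (Ext.mk₀ e.inv).comp b (zero_add n) :=
    Subsingleton.elim _ _
  calc a = (Ext.mk₀ (e.hom ≫ e.inv)).comp a (zero_add n) := by simp
    _ = (Ext.mk₀ e.hom).comp ((Ext.mk₀ e.inv).comp a (zero_add n)) (zero_add n) := by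
        rw [Ext.mk₀_comp_mk₀_assoc]
    _ = (Ext.mk₀ e.hom).comp ((Ext.mk₀ e.inv).comp b (zero_add n)) (zero_add n) := by rw [h']
    _ = b := by simp

lemma cores_mem_leftPerp (𝒯 : Set C) (hT : 𝒯 ⊆ rightPerp.{w} 𝒯) :
    ∀ (n : ℕ) (W' : C), CoresOfLength 𝒯 n W' → W' ∈ leftPerp.{w} (rightPerp.{w} 𝒯) := by
  intro n
  induction n with
  | zero =>
    rintro W' ⟨T₀, hT₀, ⟨e⟩⟩ B hB i hi
    exact subsingleton_of_iso e i (hB T₀ hT₀ i hi)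
  | succ n ih =>
    rintro W' ⟨T₀, M', f, g, w, hT₀, hses, hM'⟩ B hB i hi
    have h1 : Subsingleton (Ext.{w} T₀ B i) := hB T₀ hT₀ i hi
    have h2 : Subsingleton (Ext.{w} M' B (1 + i)) := ih M' hM' B hB (1 + i) (by omega)
    constructor
    intro a b
    suffices hz : ∀ x : Ext.{w} W' B i, x = 0 by rw [hz a, hz b]
    intro x
    obtain ⟨x₂, hx₂⟩ := Abelian.Ext.contravariant_sequence_exact₁ hses B x rfl (Subsingleton.elim _ _)
    rw [← hx₂, Subsingleton.elim x₂ 0, Ext.comp_zero]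

end Stmt10Aux

/-- Let `𝒯 ⊆ 𝒯^⊥` and suppose there is an exact sequence
`0 → W → M₀ → M₁ → ⋯ → Mₙ → 0` with all `Mⱼ ∈ 𝒯` (encoded: a short exact sequence
`0 → W → M₀ → W' → 0` with `M₀ ∈ 𝒯` and `W'` having a finite `𝒯`-coresolution).
Then `f₀ : W ⟶ M₀` is a special `𝒯^⊥`-preenvelope: it is a monomorphism, `M₀ ∈ 𝒯^⊥`,
its cokernel `W'` lies in `⊥(𝒯^⊥)`, and every morphism from `W` to an object of `𝒯^⊥`
factors through `f₀`. -/
theorem stmt10 (𝒯 : Set C) (hT : 𝒯 ⊆ rightPerp.{w} 𝒯)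
    {W M₀ W' : C} (f₀ : W ⟶ M₀) (g : M₀ ⟶ W') (w : f₀ ≫ g = 0)
    (hse : (ShortComplex.mk f₀ g w).ShortExact) (hM₀ : M₀ ∈ 𝒯)
    {n : ℕ} (hW' : CoresOfLength 𝒯 n W') :
    Mono f₀ ∧ M₀ ∈ rightPerp.{w} 𝒯 ∧ W' ∈ leftPerp.{w} (rightPerp.{w} 𝒯) ∧
      ∀ Z ∈ rightPerp.{w} 𝒯, ∀ h : W ⟶ Z, ∃ k : M₀ ⟶ Z, f₀ ≫ k = h := by
  have hWperp : W' ∈ leftPerp.{w} (rightPerp.{w} 𝒯) :=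
    Stmt10Aux.cores_mem_leftPerp 𝒯 hT n W' hW'
  refine ⟨hse.mono_f, hT hM₀, hWperp, ?_⟩
  intro Z hZ h
  have hsub : Subsingleton (Abelian.Ext.{w} W' Z 1) := hWperp Z hZ 1 le_rfl
  obtain ⟨x₂, hx₂⟩ := Abelian.Ext.contravariant_sequence_exact₁ hse Z (Abelian.Ext.mk₀ h) rfl
    (Subsingleton.elim _ _)
  refine ⟨Stmt10Aux.ext0ToHom x₂, ?_⟩
  rw [← Stmt10Aux.ext0ToHom_mk₀_comp, hx₂, Stmt10Aux.ext0ToHom_mk₀]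
end

section
/- Let C be an abelian category, X a class of objects of C closed under extensions and direct summands, and let (A,B) be a pair of classes of objects of C such that every X ∈ X admits a short exact sequence 0 → X → B_X → A_X → 0 with B_X ∈ B ∩ X and A_X ∈ A ∩ X (i.e., the pair is right X-complete). Assume B ∩ X is closed under direct summands. If α is a class of objects with α ⊆ X and Ext^1_C(X, W) = 0 for all X ∈ X and W ∈ α, then α ⊆ B ∩ X. -/
open CategoryTheory Limits

universe w v u

section Aux

variable {C : Type u} [Category.{v} C] [Abelian C] [HasExt.{w} C]

open DerivedCategory in
/-- If a morphism `f : Y ⟶ X` admits a "retraction" in `Ext X Y 0`, then it admits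
an actual retraction in `C`. -/
lemma exists_retraction_of_ext {X Y : C} (f : Y ⟶ X) (x : Abelian.Ext X Y 0)
    (hx : (Abelian.Ext.mk₀ f).comp x (zero_add 0) = Abelian.Ext.mk₀ (𝟙 Y)) :
    ∃ r : X ⟶ Y, f ≫ r = 𝟙 Y := by
  letI := HasDerivedCategory.standard C
  have hf : (singleFunctor C 0).map f ≫ x.hom = (Abelian.Ext.mk₀ (𝟙 Y)).hom := by
    rw [Abelian.Ext.singleFunctor_map_comp_hom, hx]
  rw [Abelian.Ext.mk₀_hom, CategoryTheory.Functor.map_id] at hf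
  -- the morphism `single X ⟶ single Y` induced by `x`
  set φ : (singleFunctor C 0).obj X ⟶ (singleFunctor C 0).obj Y :=
    x.hom ≫ (shiftFunctorZero' (DerivedCategory C) ((0 : ℕ) : ℤ) (by simp)).hom.app
      ((singleFunctor C 0).obj Y) with hφ
  have hfφ : (singleFunctor C 0).map f ≫ φ = 𝟙 _ := by
    rw [hφ, ← Category.assoc, hf]
    dsimp [ShiftedHom.mk₀]
    rw [Category.id_comp, Iso.inv_hom_id_app]; rfl
  -- the natural isomorphism `singleFunctor C 0 ⋙ homologyFunctor C 0 ≅ 𝟭 C`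
  let e : singleFunctor C 0 ⋙ homologyFunctor C 0 ≅ 𝟭 C :=
    Functor.isoWhiskerRight ((SingleFunctors.evaluation _ _ 0).mapIso
        (singleFunctorsPostcompQIso C)) (homologyFunctor C 0) ≪≫
      Functor.associator _ _ _ ≪≫
      Functor.isoWhiskerLeft (CochainComplex.singleFunctor C 0) (homologyFunctorFactors C 0) ≪≫
      HomologicalComplex.homologyFunctorSingleIso C (ComplexShape.up ℤ) 0
  refine ⟨e.inv.app X ≫ (homologyFunctor C 0).map φ ≫ e.hom.app Y, ?_⟩
  have := e.inv.naturality f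
  dsimp at this
  rw [← Category.assoc, this, Category.assoc, ← Functor.map_comp_assoc, hfφ, CategoryTheory.Functor.map_id,
    Category.id_comp, Iso.inv_hom_id_app]
  rfl

end Aux

/-- Let `C` be abelian, `𝒳` closed under extensions and direct summands,
and `(𝒜, ℬ)` a right `𝒳`-complete pair: every `X ∈ 𝒳` fits in a short exact sequence
`0 → X → B_X → A_X → 0` with `B_X ∈ ℬ ∩ 𝒳`, `A_X ∈ 𝒜 ∩ 𝒳`. Assume `ℬ ∩ 𝒳` is closed
under direct summands. If `α ⊆ 𝒳` and `Ext¹(X, W) = 0` for all `X ∈ 𝒳`, `W ∈ α`, then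
`α ⊆ ℬ ∩ 𝒳`. -/
theorem stmt11 {C : Type u} [Category.{v} C] [Abelian C] [HasExt.{w} C]
    (𝒳 𝒜 ℬ α : Set C)
    (hXext : ∀ (S : ShortComplex C), S.ShortExact → S.X₁ ∈ 𝒳 → S.X₃ ∈ 𝒳 → S.X₂ ∈ 𝒳)
    (hXsmd : ∀ ⦃X Y : C⦄ (s : X ⟶ Y) (r : Y ⟶ X), s ≫ r = 𝟙 X → Y ∈ 𝒳 → X ∈ 𝒳)
    (hBXsmd : ∀ ⦃X Y : C⦄ (s : X ⟶ Y) (r : Y ⟶ X), s ≫ r = 𝟙 X →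
      Y ∈ ℬ ∩ 𝒳 → X ∈ ℬ ∩ 𝒳)
    (hcomp : ∀ X ∈ 𝒳, ∃ (B A : C) (f : X ⟶ B) (g : B ⟶ A) (w : f ≫ g = 0),
      (ShortComplex.mk f g w).ShortExact ∧ B ∈ ℬ ∩ 𝒳 ∧ A ∈ 𝒜 ∩ 𝒳)
    (hα𝒳 : α ⊆ 𝒳)
    (hαExt : ∀ X ∈ 𝒳, ∀ W ∈ α, Subsingleton (Abelian.Ext X W 1)) :
    α ⊆ ℬ ∩ 𝒳 := by
  intro W hWα
  have hW𝒳 : W ∈ 𝒳 := hα𝒳 hWα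
  obtain ⟨B, A, f, g, w, hSE, hB, hA⟩ := hcomp W hW𝒳
  have hsub : Subsingleton (Abelian.Ext A W 1) := hαExt A hA.2 W hWα
  obtain ⟨x₂, hx₂⟩ := Abelian.Ext.contravariant_sequence_exact₁ hSE W
    (Abelian.Ext.mk₀ (𝟙 W)) (n₁ := 1) rfl (Subsingleton.elim _ _)
  obtain ⟨r, hr⟩ := exists_retraction_of_ext f x₂ hx₂
  exact hBXsmd f r hr hB
end
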